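/- For N ≥ 2 and 1 ≤ k ≤ N, ∑_{n=1}^{N-1} sin(πn(2k-1)/N)/sin(πn/N) = N + 1 - 2k. -/

import Mathlib

open Finset Real

lemma sin_odd_sum (m : ℕ) (x : ℝ) :
    Real.sin ((2 * (m : ℝ) + 1) * x)
      = Real.sin x * (1 + 2 * ∑ j ∈ Finset.Icc 1 m, Real.cos (2 * (j : ℝ) * x)) := by
  induction m with
  | zero => simp
  | succ m ih =>
    have key : Real.sin ((2 * ((m : ℝ) + 1) + 1) * x)
        = Real.sin ((2 * (m : ℝ) + 1) * x) + 2 * Real.sin x * Real.cos (2 * ((m : ℝ) + 1) * x) := by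
      have h := Real.sin_sub_sin ((2 * ((m : ℝ) + 1) + 1) * x) ((2 * (m : ℝ) + 1) * x)
      have e1 : ((2 * ((m : ℝ) + 1) + 1) * x - (2 * (m : ℝ) + 1) * x) / 2 = x := by ring
      have e2 : ((2 * ((m : ℝ) + 1) + 1) * x + (2 * (m : ℝ) + 1) * x) / 2
          = 2 * ((m : ℝ) + 1) * x := by ring
      rw [e1, e2] at h
      linarith
    push_cast
    rw [key, ih, Finset.sum_Icc_succ_top (by omega : 1 ≤ m + 1)]
    push_cast
    ring

lemma cos_sum_eq_zero (N j : ℕ) (hj1 : 1 ≤ j) (hj2 : j < N) :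
    ∑ n ∈ Finset.range N, Real.cos (2 * π * j * n / N) = 0 := by
  have hNpos : 0 < N := by omega
  have hN0 : (N : ℝ) ≠ 0 := by positivity
  set ζ : ℂ := Complex.exp (2 * π * j / N * Complex.I) with hζ
  have hζ1 : ζ ≠ 1 := by
    intro h
    rw [hζ, Complex.exp_eq_one_iff] at h
    obtain ⟨n, hn⟩ := h
    have hn' : ((2 * π * j / N : ℝ) : ℂ) * Complex.I = ((n * (2 * π) : ℝ) : ℂ) * Complex.I := by
      push_cast
      rw [hn]
      ring
    have hc := mul_right_cancel₀ Complex.I_ne_zero hn'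
    have hr : 2 * π * (j : ℝ) / N = n * (2 * π) := by exact_mod_cast hc
    have hπ : (0:ℝ) < π := Real.pi_pos
    have hjn : (j : ℝ) = n * N := by
      rw [div_eq_iff hN0] at hr
      have h2 : (2 * π) * (j : ℝ) = (2 * π) * ((n : ℝ) * N) := by linear_combination hr
      exact mul_left_cancel₀ (by positivity) h2
    have hjz : (j : ℤ) = n * N := by exact_mod_cast hjn
    have hNZ : (0:ℤ) < (N:ℤ) := by exact_mod_cast hNpos
    rcases lt_or_ge n 1 with h1 | h1
    · have : (j:ℤ) ≤ 0 := by nlinarith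
      omega
    · have : ((N:ℤ)) ≤ j := by nlinarith
      omega
  have hζN : ζ ^ N = 1 := by
    rw [hζ, ← Complex.exp_nat_mul, Complex.exp_eq_one_iff]
    refine ⟨j, ?_⟩
    have : (N : ℂ) ≠ 0 := by exact_mod_cast Nat.cast_ne_zero.mpr (by omega)
    field_simp
    simp
  have hsum : ∑ n ∈ Finset.range N, ζ ^ n = 0 := by
    have h := geom_sum_eq hζ1 N
    rw [h, hζN]
    simp
  have hre : ∑ n ∈ Finset.range N, Real.cos (2 * π * j * n / N)
      = (∑ n ∈ Finset.range N, ζ ^ n).re := by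
    rw [Complex.re_sum]
    refine Finset.sum_congr rfl fun n _ => ?_
    rw [hζ, ← Complex.exp_nat_mul]
    have : (n : ℂ) * (2 * π * j / N * Complex.I)
        = ((2 * π * j * n / N : ℝ) : ℂ) * Complex.I := by push_cast; ring
    rw [this, Complex.exp_ofReal_mul_I_re]
  rw [hre, hsum, Complex.zero_re]

theorem sum_sin_div_sin (N : ℕ) (hN : 2 ≤ N) (k : ℕ) (hk1 : 1 ≤ k) (hk2 : k ≤ N) :
    ∑ n ∈ Finset.Icc 1 (N - 1),
      Real.sin (π * n * (2 * k - 1) / N) / Real.sin (π * n / N) = (N : ℝ) + 1 - 2 * k := by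
  obtain ⟨m, rfl⟩ : ∃ m, k = m + 1 := ⟨k - 1, by omega⟩
  have hNpos : (0:ℝ) < N := by positivity
  have hπ : (0:ℝ) < π := Real.pi_pos
  have step : ∀ n ∈ Finset.Icc 1 (N - 1),
      Real.sin (π * n * (2 * (m + 1 : ℕ) - 1) / N) / Real.sin (π * n / N)
        = 1 + 2 * ∑ j ∈ Finset.Icc 1 m, Real.cos (2 * (j : ℝ) * (π * n / N)) := by
    intro n hn
    rw [Finset.mem_Icc] at hn
    have hn1 : (1:ℝ) ≤ n := by exact_mod_cast hn.1
    have hnN : (n:ℝ) < N := by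
      have : n < N := by omega
      exact_mod_cast this
    have hsin : Real.sin (π * n / N) ≠ 0 := by
      apply ne_of_gt
      apply Real.sin_pos_of_pos_of_lt_pi
      · positivity
      · rw [div_lt_iff₀ hNpos] at *
        nlinarith
    have harg : π * n * (2 * (m + 1 : ℕ) - 1) / N = (2 * (m : ℝ) + 1) * (π * n / N) := by
      push_cast
      field_simp
      ring
    rw [harg, sin_odd_sum m (π * n / N)]
    exact mul_div_cancel_left₀ _ hsin
  rw [Finset.sum_congr rfl step]
  have hcard : (Finset.Icc 1 (N - 1)).card = N - 1 := by
    rw [Nat.card_Icc]; omega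
  have inner : ∀ j ∈ Finset.Icc 1 m,
      ∑ n ∈ Finset.Icc 1 (N - 1), Real.cos (2 * (j : ℝ) * (π * n / N)) = -1 := by
    intro j hj
    rw [Finset.mem_Icc] at hj
    have hjN : j < N := by omega
    have h0 := cos_sum_eq_zero N j hj.1 hjN
    have hIcc : Finset.Icc 1 (N - 1) = Finset.Ico 1 N := by
      rw [← Finset.Ico_add_one_right_eq_Icc]
      congr 1
      omega
    have hsplit : ∑ n ∈ Finset.range N, Real.cos (2 * π * j * n / N)
        = Real.cos (2 * π * j * 0 / N) + ∑ n ∈ Finset.Ico 1 N, Real.cos (2 * π * j * n / N) := by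
      rw [Finset.range_eq_Ico]
      simpa using Finset.sum_eq_sum_Ico_succ_bot (show 0 < N by omega) (fun n => Real.cos (2 * π * j * n / N))
    have heq : ∑ n ∈ Finset.Ico 1 N, Real.cos (2 * π * j * n / N)
        = ∑ n ∈ Finset.Icc 1 (N - 1), Real.cos (2 * (j : ℝ) * (π * n / N)) := by
      rw [hIcc]
      refine Finset.sum_congr rfl fun n _ => ?_
      congr 1
      ring
    rw [hsplit, heq] at h0
    simp at h0
    linarith
  rw [Finset.sum_add_distrib, Finset.sum_const, hcard, ← Finset.mul_sum, Finset.sum_comm,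
    Finset.sum_congr rfl inner, Finset.sum_const, Nat.card_Icc]
  have h1 : ((N - 1 : ℕ) : ℝ) = (N : ℝ) - 1 := by
    have : (1:ℕ) ≤ N := by omega
    push_cast [this]
    ring
  simp [h1]
  ring
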